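/- For any string s of length n ≥ 1, the number of phrases in the (non-self-referencing) LZ77 parse of s is at most the size of the smallest context-free grammar that generates s and only s. -/

import Mathlib

open List

/-- The (non-self-referencing) greedy LZ77 parse of `s`: the phrases are nonempty and
concatenate to `s`; each phrase is a single character or an infix of the already-parsed
prefix, and each phrase is a longest prefix of the unparsed suffix occurring in the
parsed prefix. -/
def IsLZ77Parse {α : Type} (s : List α) (P : List (List α)) : Prop :=
  P.flatten = s ∧ (∀ p ∈ P, p ≠ []) ∧
  ∀ i : Fin P.length,
    ((P.get i).length = 1 ∨ P.get i <:+: (P.take i.1).flatten) ∧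
    ∀ q : List α, q <+: (P.drop i.1).flatten → q <:+: (P.take i.1).flatten →
      q.length ≤ max (P.get i).length 1

/-- The size of a context-free grammar: total number of symbols on right-hand sides. -/
noncomputable def grammarSize {T : Type} (G : ContextFreeGrammar T) : ℕ :=
  ∑ r ∈ G.rules, r.output.length

/-- A grammar is in Chomsky normal form: every rule is `A → a` or `A → B C`. -/
def IsCNF {T : Type} (G : ContextFreeGrammar T) : Prop :=
  ∀ r ∈ G.rules, (∃ a : T, r.output = [Symbol.terminal a]) ∨
    (∃ B C : G.NT, r.output = [Symbol.nonterminal B, Symbol.nonterminal C])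


namespace LZAux

attribute [local instance 10] Classical.propDecidable

variable {g : ContextFreeGrammar.{uN} T}

inductive DIn (g : ContextFreeGrammar.{uN} T) :
    List (Symbol T g.NT) → List (Symbol T g.NT) → ℕ → Prop
  | refl (v : List (Symbol T g.NT)) : DIn g v v 0
  | step {u v w : List (Symbol T g.NT)} {n : ℕ} :
      g.Produces u v → DIn g v w n → DIn g u w (n + 1)

lemma DIn.derives {u v : List (Symbol T g.NT)} {n : ℕ} (h : DIn g u v n) : g.Derives u v := by
  induction h with
  | refl => rfl
  | step hp _ ih => exact hp.trans_derives ih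

lemma derives_dIn {u v : List (Symbol T g.NT)} (h : g.Derives u v) : ∃ n, DIn g u v n := by
  induction h using Relation.ReflTransGen.head_induction_on with
  | refl => exact ⟨0, DIn.refl v⟩
  | head hp _ ih => obtain ⟨n, hn⟩ := ih; exact ⟨n + 1, DIn.step hp hn⟩

lemma map_terminal_ne_has_nt {w : List T} {p q : List (Symbol T g.NT)} {A : g.NT}
    (h : List.map Symbol.terminal w = p ++ [Symbol.nonterminal A] ++ q) : False := by
  have : Symbol.nonterminal A ∈ List.map Symbol.terminal w := by rw [h]; simp
  simp only [List.mem_map] at this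
  obtain ⟨a, -, ha⟩ := this
  cases ha

lemma terminal_inj {w w' : List T} (h : List.map (Symbol.terminal : T → Symbol T g.NT) w
    = List.map Symbol.terminal w') : w = w' :=
  List.map_injective_iff.mpr (fun _ _ h => Symbol.terminal.inj h) h

lemma DIn.terminal_src {u v : List (Symbol T g.NT)} {n : ℕ} (h : DIn g u v n)
    {w' w : List T} (hu : u = List.map Symbol.terminal w') (hv : v = List.map Symbol.terminal w) :
    w = w' := by
  cases h with
  | refl => exact (terminal_inj (hu.symm.trans hv)).symm
  | step hp _ =>
      obtain ⟨r, -, hr⟩ := hp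
      obtain ⟨p, q, hpq, -⟩ := hr.exists_parts
      exact absurd (hu ▸ hpq) map_terminal_ne_has_nt

/-- Splitting a derivation of a concatenation into derivations of the parts. -/
lemma DIn.split {u v : List (Symbol T g.NT)} {n : ℕ} (h : DIn g u v n) :
    ∀ α β : List (Symbol T g.NT), ∀ w : List T, u = α ++ β → v = List.map Symbol.terminal w →
    ∃ w₁ w₂ n₁ n₂, w = w₁ ++ w₂ ∧ DIn g α (List.map Symbol.terminal w₁) n₁ ∧
      DIn g β (List.map Symbol.terminal w₂) n₂ ∧ n₁ + n₂ = n := by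
  induction h with
  | refl v =>
      intro α β w hu hv
      subst hv
      refine ⟨w.take α.length, w.drop α.length, 0, 0, (List.take_append_drop _ _).symm, ?_, ?_, rfl⟩
      · have hα : α = List.map Symbol.terminal (w.take α.length) := by
          rw [List.map_take]
          have := congrArg (List.take α.length) hu
          simpa [List.take_left] using this.symm
        exact hα ▸ DIn.refl _
      · have hβ : β = List.map Symbol.terminal (w.drop α.length) := by
          rw [List.map_drop]
          have := congrArg (List.drop α.length) hu
          simpa [List.drop_left] using this.symm
        exact hβ ▸ DIn.refl _
  | step hp hd ih =>
      rename_i u' v' w' n'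
      intro α β w hu hv
      subst hu
      obtain ⟨r, hrmem, hr⟩ := hp
      obtain ⟨p, q, hpq, hout⟩ := hr.exists_parts
      rw [List.append_assoc] at hpq
      rcases List.append_eq_append_iff.mp hpq with ⟨a', ha1, ha2⟩ | ⟨c', hc1, hc2⟩
      · -- p = α ++ a',  β = a' ++ [nt] ++ q
        rw [← List.append_assoc] at ha2
        have hv' : v' = α ++ (a' ++ r.output ++ q) := by
          rw [hout, ha1]; simp
        obtain ⟨w₁, w₂, n₁, n₂, hw, h1, h2, hn⟩ := ih α _ w hv' hv
        refine ⟨w₁, w₂, n₁, n₂ + 1, hw, h1, ?_, by omega⟩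
        refine DIn.step ⟨r, hrmem, ?_⟩ h2
        rw [ha2]
        exact r.rewrites_of_exists_parts a' q
      · -- α = p ++ c', [nt] ++ q = c' ++ β
        cases c' with
        | nil =>
            simp only [List.append_nil] at hc1
            simp only [List.nil_append] at hc2
            subst hc1
            have hv' : v' = α ++ (r.output ++ q) := by rw [hout]; simp
            obtain ⟨w₁, w₂, n₁, n₂, hw, h1, h2, hn⟩ := ih α _ w hv' hv
            refine ⟨w₁, w₂, n₁, n₂ + 1, hw, h1, ?_, by omega⟩
            refine DIn.step ⟨r, hrmem, ?_⟩ h2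
            rw [← hc2]
            simpa using r.rewrites_of_exists_parts [] q
        | cons x c'' =>
            rw [List.cons_append] at hc2
            have hx : x = Symbol.nonterminal r.input := by
              have := congrArg (fun l => l.head?) hc2
              simpa using this.symm
            have hq : q = c'' ++ β := by
              have := congrArg List.tail hc2
              simpa using this
            subst hx
            have hα : α = p ++ [Symbol.nonterminal r.input] ++ c'' := by
              rw [hc1]; simp
            have hv' : v' = (p ++ r.output ++ c'') ++ β := by
              rw [hout, hq]; simp
            obtain ⟨w₁, w₂, n₁, n₂, hw, h1, h2, hn⟩ := ih _ β w hv' hv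
            refine ⟨w₁, w₂, n₁ + 1, n₂, hw, ?_, h2, by omega⟩
            refine DIn.step ⟨r, hrmem, ?_⟩ h1
            rw [hα]
            exact r.rewrites_of_exists_parts p c''

/-- A terminated derivation from a single nonterminal starts with a rule application. -/
lemma DIn.head_nt {A : g.NT} {w : List T} {n : ℕ}
    (h : DIn g [Symbol.nonterminal A] (List.map Symbol.terminal w) n) :
    ∃ r ∈ g.rules, r.input = A ∧ ∃ m, DIn g r.output (List.map Symbol.terminal w) m ∧ m + 1 = n := by
  generalize hu : [Symbol.nonterminal A] = u at h
  generalize hv : List.map Symbol.terminal w = v at h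
  cases h with
  | refl => exact absurd (hv.trans hu.symm) (fun hc => map_terminal_ne_has_nt (w := w)
      (p := []) (q := []) (A := A) (by simpa using hc))
  | step hp hd =>
      obtain ⟨r, hrmem, hr⟩ := hp
      obtain ⟨p, q, hpq, hout⟩ := hr.exists_parts
      rw [← hu] at hpq
      cases p with
      | cons y p' =>
          exfalso
          have h' := congrArg List.length hpq
          simp only [List.length_append, List.length_cons, List.length_singleton,
            List.length_nil] at h'
          omega
      | nil =>
          simp only [List.nil_append] at hpq hout
          have hcons : Symbol.nonterminal A :: ([] : List (Symbol T g.NT))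
              = Symbol.nonterminal r.input :: q := by simpa using hpq
          injection hcons with h1 h2
          subst hout
          rw [← h2] at hd
          simp only [List.append_nil] at hd
          exact ⟨r, hrmem, (Symbol.nonterminal.inj h1).symm, _, hv ▸ hd, rfl⟩

/-- LZ-like factorization relative to an already-produced prefix `x`. -/
def GoodFac (x : List T) (Q : List (List T)) : Prop :=
  ∀ k, ∀ hk : k < Q.length,
    (Q.get ⟨k, hk⟩).length ≤ 1 ∨ Q.get ⟨k, hk⟩ <:+: (x ++ (Q.take k).flatten)

lemma goodFac_append {x w₁ : List T} {Q₁ Q₂ : List (List T)} (hfl : Q₁.flatten = w₁)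
    (h1 : GoodFac x Q₁) (h2 : GoodFac (x ++ w₁) Q₂) : GoodFac x (Q₁ ++ Q₂) := by
  intro k hk
  by_cases hlt : k < Q₁.length
  · have hget : (Q₁ ++ Q₂).get ⟨k, hk⟩ = Q₁.get ⟨k, hlt⟩ := by
      simp [List.get_eq_getElem, List.getElem_append_left hlt]
    have htake : (Q₁ ++ Q₂).take k = Q₁.take k := List.take_append_of_le_length (le_of_lt hlt)
    rw [hget, htake]
    exact h1 k hlt
  · push_neg at hlt
    obtain ⟨j, rfl⟩ : ∃ j, k = Q₁.length + j := ⟨k - Q₁.length, by omega⟩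
    have hj : j < Q₂.length := by
      have := hk; simp only [List.length_append] at this; omega
    have hget : (Q₁ ++ Q₂).get ⟨Q₁.length + j, hk⟩ = Q₂.get ⟨j, hj⟩ := by
      simp [List.get_eq_getElem, List.getElem_append_right (Nat.le_add_right _ _)]
    have htake : (Q₁ ++ Q₂).take (Q₁.length + j) = Q₁ ++ Q₂.take j := List.take_length_add_append j
    rw [hget, htake]
    rcases h2 j hj with h | h
    · exact Or.inl h
    · right
      have he : x ++ (Q₁ ++ Q₂.take j).flatten = (x ++ w₁) ++ (Q₂.take j).flatten := by
        simp [List.flatten_append, hfl, List.append_assoc]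
      rw [he]
      exact h

lemma goodFac_nil {x : List T} : GoodFac x ([] : List (List T)) := by
  intro k hk; simp at hk

lemma goodFac_single_char {x : List T} {a : T} : GoodFac x [[a]] := by
  intro k hk
  obtain rfl : k = 0 := by simpa using hk
  exact Or.inl (by simp)

lemma goodFac_single_infix {x y : List T} (h : y <:+: x) : GoodFac x [y] := by
  intro k hk
  obtain rfl : k = 0 := by simpa using hk
  right
  simpa using h

/-- Invariant on the set of already-expanded rules. -/
def InvS (g : ContextFreeGrammar.{uN} T) (x : List T)
    (S : Finset (ContextFreeRule T g.NT)) : Prop :=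
  ∀ r ∈ S, r ∈ g.rules ∧ ∃ y, g.Derives [Symbol.nonterminal r.input] (List.map Symbol.terminal y)
    ∧ y <:+: x

lemma invS_append {g : ContextFreeGrammar.{uN} T} {x t : List T}
    {S : Finset (ContextFreeRule T g.NT)} (h : InvS g x S) : InvS g (x ++ t) S := by
  intro r hr
  obtain ⟨h1, y, h2, h3⟩ := h r hr
  exact ⟨h1, y, h2, h3.trans (List.prefix_append x t).isInfix⟩

/-- Invariant on the set of ancestor nonterminals. -/
def InvAnc (g : ContextFreeGrammar.{uN} T) (n : ℕ) (Anc : Set g.NT) : Prop :=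
  ∀ C ∈ Anc, ∃ wC : List T,
    (∀ w', g.Derives [Symbol.nonterminal C] (List.map Symbol.terminal w') → w' = wC) ∧
    ∀ k, DIn g [Symbol.nonterminal C] (List.map Symbol.terminal wC) k → n < k

lemma invAnc_mono {g : ContextFreeGrammar.{uN} T} {m n : ℕ} {Anc : Set g.NT}
    (hmn : m ≤ n) (h : InvAnc g n Anc) : InvAnc g m Anc := by
  intro C hC
  obtain ⟨wC, h1, h2⟩ := h C hC
  exact ⟨wC, h1, fun k hk => lt_of_le_of_lt hmn (h2 k hk)⟩

lemma ctx_trans {x z : List T} {β γ : List (Symbol T g.NT)}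
    (hctx : g.Derives [Symbol.nonterminal g.initial]
      (List.map Symbol.terminal x ++ β ++ List.map Symbol.terminal z))
    (h : g.Derives β γ) :
    g.Derives [Symbol.nonterminal g.initial]
      (List.map Symbol.terminal x ++ γ ++ List.map Symbol.terminal z) :=
  hctx.trans ((h.append_left _).append_right _)

lemma yield_unique {s : List T} (hG : g.language = {s}) {x z w₁ w₂ : List T} {B : g.NT}
    (hctx : g.Derives [Symbol.nonterminal g.initial]
      (List.map Symbol.terminal x ++ [Symbol.nonterminal B] ++ List.map Symbol.terminal z))
    (h1 : g.Derives [Symbol.nonterminal B] (List.map Symbol.terminal w₁))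
    (h2 : g.Derives [Symbol.nonterminal B] (List.map Symbol.terminal w₂)) : w₁ = w₂ := by
  have key : ∀ w : List T, g.Derives [Symbol.nonterminal B] (List.map Symbol.terminal w) →
      x ++ w ++ z = s := by
    intro w hw
    have hder : g.Derives [Symbol.nonterminal g.initial]
        (List.map Symbol.terminal (x ++ w ++ z)) := by
      simpa [List.map_append, List.append_assoc] using ctx_trans hctx hw
    have hmem : (x ++ w ++ z) ∈ g.language := hder
    rw [hG] at hmem
    exact hmem
  have e : x ++ (w₁ ++ z) = x ++ (w₂ ++ z) := by
    have := (key w₁ h1).trans (key w₂ h2).symm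
    simpa [List.append_assoc] using this
  exact List.append_cancel_right (List.append_cancel_left e)

/-- The inductive statement for the grammar-to-factorization construction. -/
def Stmt (g : ContextFreeGrammar.{uN} T) (n : ℕ) (β : List (Symbol T g.NT)) : Prop :=
  ∀ w x z : List T, ∀ S : Finset (ContextFreeRule T g.NT), ∀ Anc : Set g.NT,
    DIn g β (List.map Symbol.terminal w) n →
    g.Derives [Symbol.nonterminal g.initial]
      (List.map Symbol.terminal x ++ β ++ List.map Symbol.terminal z) →
    InvS g x S → InvAnc g n Anc →
    ∃ Q : List (List T), ∃ S' : Finset (ContextFreeRule T g.NT),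
      Q.flatten = w ∧ S ⊆ S' ∧ InvS g (x ++ w) S' ∧
      (∀ r ∈ S', r ∉ S → r.input ∉ Anc) ∧ GoodFac x Q ∧
      Q.length + S'.card ≤ β.length + (∑ r ∈ S' \ S, r.output.length) + S.card

lemma main_induction {s : List T} (hG : g.language = {s}) :
    ∀ n : ℕ, ∀ β : List (Symbol T g.NT), Stmt g n β := by
  intro n
  induction n using Nat.strong_induction_on with
  | _ n IHn =>
  intro β
  induction β with
  | nil =>
      intro w x z S Anc hd hctx hS hAnc
      have hw : w = [] := hd.terminal_src (by simp) rfl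
      subst hw
      refine ⟨[], S, rfl, Finset.Subset.refl S, by simpa using hS,
        fun r hr hrn => (hrn hr).elim, goodFac_nil, by simp⟩
  | cons σ β' IHβ =>
      intro w x z S Anc hd hctx hS hAnc
      obtain ⟨w₁, w₂, n₁, n₂, hw, hd₁, hd₂, hn⟩ := hd.split [σ] β' w rfl rfl
      subst hw
      have hn₂ : n₂ ≤ n := by omega
      have hsib : Stmt g n₂ β' := by
        rcases eq_or_lt_of_le hn₂ with h | h
        · exact h ▸ IHβ
        · exact IHn n₂ h β'
      cases σ with
      | terminal a =>
          have hw₁ : w₁ = [a] := hd₁.terminal_src (w' := [a]) (by simp) rfl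
          subst hw₁
          have hctx' : g.Derives [Symbol.nonterminal g.initial]
              (List.map Symbol.terminal (x ++ [a]) ++ β' ++ List.map Symbol.terminal z) := by
            simpa [List.map_append, List.append_assoc] using hctx
          obtain ⟨Q₂, S', hfl, hsub, hinv, hnew, hgood, hcount⟩ :=
            hsib w₂ (x ++ [a]) z S Anc hd₂ hctx' (invS_append hS) (invAnc_mono hn₂ hAnc)
          refine ⟨[a] :: Q₂, S', by simp [hfl], hsub, by simpa [List.append_assoc] using hinv,
            hnew, ?_, ?_⟩
          · exact goodFac_append (Q₁ := [[a]]) (by simp) goodFac_single_char hgood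
          · simp only [List.length_cons]
            omega
      | nonterminal B =>
          -- terminal context for B
          have hctxB : g.Derives [Symbol.nonterminal g.initial]
              (List.map Symbol.terminal x ++ [Symbol.nonterminal B]
                ++ List.map Symbol.terminal (w₂ ++ z)) := by
            have h := ctx_trans hctx (hd₂.derives.append_left [Symbol.nonterminal B])
            simpa [List.map_append, List.append_assoc] using h
          by_cases hrep : ∃ r ∈ S, r.input = B
          · -- repeat case
            obtain ⟨r₀, hr₀S, hr₀B⟩ := hrep
            obtain ⟨hr₀mem, y, hyD, hyx⟩ := hS r₀ hr₀S
            rw [hr₀B] at hyD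
            have hy : w₁ = y := yield_unique hG hctxB hd₁.derives hyD
            have hctx' : g.Derives [Symbol.nonterminal g.initial]
                (List.map Symbol.terminal (x ++ w₁) ++ β' ++ List.map Symbol.terminal z) := by
              have h := ctx_trans hctx (hd₁.derives.append_right β')
              simpa [List.map_append, List.append_assoc] using h
            obtain ⟨Q₂, S', hfl, hsub, hinv, hnew, hgood, hcount⟩ :=
              hsib w₂ (x ++ w₁) z S Anc hd₂ hctx' (invS_append hS) (invAnc_mono hn₂ hAnc)
            refine ⟨w₁ :: Q₂, S', by simp [hfl], hsub,
              by simpa [List.append_assoc] using hinv, hnew, ?_, ?_⟩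
            · exact goodFac_append (Q₁ := [w₁]) (by simp)
                (goodFac_single_infix (hy ▸ hyx)) hgood
            · simp only [List.length_cons]
              omega
          · by_cases hBanc : B ∈ Anc
            · -- impossible: ancestor reexpansion
              exfalso
              obtain ⟨wC, huniq, hlen⟩ := hAnc B hBanc
              have hw₁C : w₁ = wC := huniq w₁ hd₁.derives
              have := hlen n₁ (hw₁C ▸ hd₁)
              omega
            · -- expansion case
              have hex : ∃ k, DIn g [Symbol.nonterminal B] (List.map Symbol.terminal w₁) k :=
                ⟨n₁, hd₁⟩
              have hdm : DIn g [Symbol.nonterminal B] (List.map Symbol.terminal w₁)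
                  (Nat.find hex) := Nat.find_spec hex
              have hmle : Nat.find hex ≤ n₁ := Nat.find_min' hex hd₁
              obtain ⟨r, hrmem, hrB, m', hdr, hm'⟩ := hdm.head_nt
              subst hrB
              have hm'n : m' < n := by omega
              have hctxR : g.Derives [Symbol.nonterminal g.initial]
                  (List.map Symbol.terminal x ++ r.output
                    ++ List.map Symbol.terminal (w₂ ++ z)) :=
                hctxB.trans_produces ⟨r, hrmem,
                  r.rewrites_of_exists_parts (List.map Symbol.terminal x)
                    (List.map Symbol.terminal (w₂ ++ z))⟩
              have huniqB : ∀ w', g.Derives [Symbol.nonterminal r.input]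
                  (List.map Symbol.terminal w') → w' = w₁ :=
                fun w' hw' => yield_unique hG hctxB hw' hd₁.derives
              have hAncIn : InvAnc g m' (insert r.input Anc) := by
                intro C hC
                rcases Set.mem_insert_iff.mp hC with rfl | hCA
                · exact ⟨w₁, huniqB, fun k hk => by
                    have := Nat.find_min' hex hk
                    omega⟩
                · obtain ⟨wC, hu, hl⟩ := hAnc C hCA
                  exact ⟨wC, hu, fun k hk => lt_of_le_of_lt (le_of_lt hm'n) (hl k hk)⟩
              obtain ⟨Q₁, S₁, hfl₁, hsub₁, hinv₁, hnew₁, hgood₁, hcount₁⟩ :=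
                IHn m' hm'n r.output w₁ x (w₂ ++ z) S (insert r.input Anc) hdr hctxR hS hAncIn
              have hrS₁ : r ∉ S₁ := fun hmem =>
                (hnew₁ r hmem (fun hrS => hrep ⟨r, hrS, rfl⟩)) (Set.mem_insert _ _)
              have hctx' : g.Derives [Symbol.nonterminal g.initial]
                  (List.map Symbol.terminal (x ++ w₁) ++ β' ++ List.map Symbol.terminal z) := by
                have h := ctx_trans hctx (hd₁.derives.append_right β')
                simpa [List.map_append, List.append_assoc] using h
              have hS₂inv : InvS g (x ++ w₁) (insert r S₁) := by
                intro r' hr'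
                rcases Finset.mem_insert.mp hr' with rfl | hr'S₁
                · exact ⟨hrmem, w₁, hd₁.derives, (List.suffix_append x w₁).isInfix⟩
                · exact hinv₁ r' hr'S₁
              obtain ⟨Q₂, S', hfl₂, hsub₂, hinv₂, hnew₂, hgood₂, hcount₂⟩ :=
                hsib w₂ (x ++ w₁) z (insert r S₁) Anc hd₂ hctx' hS₂inv (invAnc_mono hn₂ hAnc)
              have hrS : r ∉ S := fun hrS => hrep ⟨r, hrS, rfl⟩
              have hSsub₁ : S ⊆ S₁ := hsub₁
              have hSsub₂ : (insert r S₁ : Finset _) ⊆ S' := hsub₂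
              refine ⟨Q₁ ++ Q₂, S', by simp [hfl₁, hfl₂], ?_, ?_, ?_, ?_, ?_⟩
              · exact (hsub₁.trans (Finset.subset_insert r S₁)).trans hsub₂
              · simpa [List.append_assoc] using hinv₂
              · intro r' hr'S' hr'S
                by_cases h2' : r' ∈ insert r S₁
                · rcases Finset.mem_insert.mp h2' with rfl | hr'S₁
                  · exact hBanc
                  · by_cases hr'inS : r' ∈ S
                    · exact absurd hr'inS hr'S
                    · exact fun hc => (hnew₁ r' hr'S₁ hr'inS) (Set.mem_insert_iff.mpr (Or.inr hc))
                · exact hnew₂ r' hr'S' h2'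
              · exact goodFac_append hfl₁ hgood₁ hgood₂
              · -- counting
                have hcard₂ : (insert r S₁).card = S₁.card + 1 :=
                  Finset.card_insert_of_notMem hrS₁
                have hdisj : Disjoint (S₁ \ S) (S' \ insert r S₁) := by
                  rw [Finset.disjoint_left]
                  intro a ha hb
                  exact (Finset.mem_sdiff.mp hb).2
                    (Finset.mem_insert.mpr (Or.inr (Finset.mem_sdiff.mp ha).1))
                have hrU : r ∉ (S₁ \ S) ∪ (S' \ insert r S₁) := by
                  intro h
                  rcases Finset.mem_union.mp h with h1 | h1
                  · exact hrS₁ (Finset.mem_sdiff.mp h1).1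
                  · exact (Finset.mem_sdiff.mp h1).2 (Finset.mem_insert_self r S₁)
                have hUsub : insert r ((S₁ \ S) ∪ (S' \ insert r S₁)) ⊆ S' \ S := by
                  intro a ha
                  rcases Finset.mem_insert.mp ha with ha' | hu
                  · subst ha'
                    exact Finset.mem_sdiff.mpr ⟨hSsub₂ (Finset.mem_insert_self a S₁), hrS⟩
                  · rcases Finset.mem_union.mp hu with h1 | h1
                    · obtain ⟨ha1, ha2⟩ := Finset.mem_sdiff.mp h1
                      exact Finset.mem_sdiff.mpr ⟨hSsub₂ (Finset.mem_insert.mpr (Or.inr ha1)), ha2⟩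
                    · obtain ⟨ha1, ha2⟩ := Finset.mem_sdiff.mp h1
                      exact Finset.mem_sdiff.mpr
                        ⟨ha1, fun hc => ha2 (Finset.mem_insert.mpr (Or.inr (hSsub₁ hc)))⟩
                have hkey : r.output.length + (∑ r'' ∈ S₁ \ S, r''.output.length)
                    + (∑ r'' ∈ S' \ insert r S₁, r''.output.length)
                    ≤ ∑ r'' ∈ S' \ S, r''.output.length := by
                  calc r.output.length + (∑ r'' ∈ S₁ \ S, r''.output.length)
                      + (∑ r'' ∈ S' \ insert r S₁, r''.output.length)
                      = ∑ r'' ∈ insert r ((S₁ \ S) ∪ (S' \ insert r S₁)), r''.output.length := by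
                        rw [Finset.sum_insert hrU, Finset.sum_union hdisj, Nat.add_assoc]
                    _ ≤ ∑ r'' ∈ S' \ S, r''.output.length :=
                        Finset.sum_le_sum_of_subset hUsub
                simp only [List.length_append, List.length_cons]
                omega


lemma flatten_take_succ {α : Type} {L : List (List α)} {k : ℕ} (hk : k < L.length) :
    (L.take (k + 1)).flatten = (L.take k).flatten ++ L.get ⟨k, hk⟩ := by
  have h1 : L.take (k + 1) = L.take k ++ [L.get ⟨k, hk⟩] := by
    rw [List.take_succ, List.getElem?_eq_getElem hk]
    simp
  rw [h1, List.flatten_append]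
  simp

lemma flatten_take_eq {α : Type} {s : List α} {L : List (List α)} (hf : L.flatten = s) (k : ℕ) :
    (L.take k).flatten = s.take ((L.take k).flatten).length := by
  have hsplit : (L.take k).flatten ++ (L.drop k).flatten = s := by
    rw [← List.flatten_append, List.take_append_drop, hf]
  conv_rhs => rw [← hsplit]
  rw [List.take_left]

lemma flatten_drop_eq {α : Type} {s : List α} {L : List (List α)} (hf : L.flatten = s) (k : ℕ) :
    (L.drop k).flatten = s.drop ((L.take k).flatten).length := by
  have hsplit : (L.take k).flatten ++ (L.drop k).flatten = s := by
    rw [← List.flatten_append, List.take_append_drop, hf]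
  conv_rhs => rw [← hsplit]
  rw [List.drop_left]

/-- Greedy optimality of the LZ77 parse among LZ-like factorizations. -/
lemma greedy_optimal {α : Type} (s : List α) (P Q : List (List α)) (hP : IsLZ77Parse s P)
    (hQf : Q.flatten = s)
    (hQ : ∀ k, ∀ hk : k < Q.length,
      (Q.get ⟨k, hk⟩).length ≤ 1 ∨ Q.get ⟨k, hk⟩ <:+: (Q.take k).flatten) :
    P.length ≤ Q.length := by
  obtain ⟨hPf, hPne, hPm⟩ := hP
  have key : ∀ k, k ≤ P.length →
      ((Q.take k).flatten).length ≤ ((P.take k).flatten).length := by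
    intro k
    induction k with
    | zero => simp
    | succ k ih =>
        intro hk1
        have hk : k < P.length := hk1
        have iha := ih (le_of_lt hk)
        have hPk1 : 1 ≤ (P.get ⟨k, hk⟩).length :=
          List.length_pos_iff.mpr (hPne _ (List.get_mem P ⟨k, hk⟩))
        have hasucc : ((P.take (k + 1)).flatten).length
            = ((P.take k).flatten).length + (P.get ⟨k, hk⟩).length := by
          rw [flatten_take_succ hk]; simp
        by_cases hkQ : k < Q.length
        · have hbsucc : ((Q.take (k + 1)).flatten).length
              = ((Q.take k).flatten).length + (Q.get ⟨k, hkQ⟩).length := by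
            rw [flatten_take_succ hkQ]; simp
          rcases hQ k hkQ with hlen | hinf
          · omega
          · by_cases hble : ((Q.take (k + 1)).flatten).length ≤ ((P.take k).flatten).length
            · omega
            · push_neg at hble
              set ak := ((P.take k).flatten).length with hak
              set bk := ((Q.take k).flatten).length with hbk
              set bk1 := ((Q.take (k + 1)).flatten).length with hbk1
              -- bound : bk1 ≤ s.length
              have hbk1s : bk1 ≤ s.length := by
                have := congrArg List.length (flatten_take_eq hQf (k + 1))
                simp only [List.length_take] at this
                omega
              set rq := (s.drop ak).take (bk1 - ak) with hrq
              -- rq is a prefix of the unparsed suffix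
              have hpre : rq <+: (P.drop k).flatten := by
                rw [flatten_drop_eq hPf k, ← hak]
                exact List.take_prefix _ _
              -- Q_k as a segment of s
              have hQk : s.take bk1 = (Q.take k).flatten ++ Q.get ⟨k, hkQ⟩ := by
                rw [← flatten_take_succ hkQ, flatten_take_eq hQf (k + 1), ← hbk1]
              -- rq as a suffix of Q_k
              have hrq2 : rq = (Q.get ⟨k, hkQ⟩).drop (ak - bk) := by
                rw [hrq, ← List.drop_take, hQk]
                have : ak = ((Q.take k).flatten).length + (ak - bk) := by omega
                rw [this, List.drop_length_add_append]
                congr 1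
                omega
              -- rq occurs in the parsed prefix
              have hinf' : rq <:+: (P.take k).flatten := by
                rw [flatten_take_eq hPf k, ← hak]
                have h1 : rq <:+: (Q.take k).flatten :=
                  (hrq2 ▸ (List.drop_suffix _ _).isInfix).trans hinf
                refine h1.trans ?_
                rw [flatten_take_eq hQf k, ← hbk]
                have : s.take bk = (s.take ak).take bk := by
                  rw [List.take_take, min_eq_left iha]
                rw [this]
                exact (List.take_prefix _ _).isInfix
              have hgr := (hPm ⟨k, hk⟩).2 rq hpre hinf'
              rw [Nat.max_eq_left hPk1] at hgr
              have hlrq : rq.length = bk1 - ak := by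
                rw [hrq]
                simp only [List.length_take, List.length_drop]
                omega
              omega
        · push_neg at hkQ
          have : Q.take (k + 1) = Q.take k := by
            rw [List.take_of_length_le hkQ, List.take_of_length_le (le_of_lt (by omega))]
          rw [this]
          omega
  by_contra hcon
  push_neg at hcon
  have h1 := key Q.length (le_of_lt hcon)
  have h2 : ((Q.take Q.length).flatten).length = s.length := by
    rw [List.take_length, hQf]
  have h3 : ((P.take Q.length).flatten).length < s.length := by
    have hsplit : (P.take Q.length).flatten ++ (P.drop Q.length).flatten = s := by
      rw [← List.flatten_append, List.take_append_drop, hPf]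
    have hne : (P.drop Q.length).flatten ≠ [] := by
      intro hnil
      have hdne : P.drop Q.length ≠ [] := by
        intro h
        have := congrArg List.length h
        simp only [List.length_drop, List.length_nil] at this
        omega
      obtain ⟨p, hp⟩ := List.exists_mem_of_ne_nil _ hdne
      exact hPne p (List.mem_of_mem_drop hp) (List.flatten_eq_nil_iff.mp hnil p hp)
    have := congrArg List.length hsplit
    simp only [List.length_append] at this
    have := List.length_pos_iff.mpr hne
    omega
  omega

end LZAux

/-- The number of phrases of the LZ77 parse is a lower bound on the size of any
context-free grammar generating `s` and only `s`. -/
theorem lz77_phrases_le_smallest_grammar {α : Type} (s : List α) (hn : 1 ≤ s.length)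
    (P : List (List α)) (hP : IsLZ77Parse s P)
    (G : ContextFreeGrammar α) (hG : G.language = {s}) :
    P.length ≤ grammarSize G := by
  classical
  have hsmem : s ∈ G.language := by rw [hG]; rfl
  have hder : G.Derives [Symbol.nonterminal G.initial] (List.map Symbol.terminal s) := hsmem
  obtain ⟨n0, hd0⟩ := LZAux.derives_dIn hder
  have hex : ∃ k, LZAux.DIn G [Symbol.nonterminal G.initial] (List.map Symbol.terminal s) k :=
    ⟨n0, hd0⟩
  have hdm := Nat.find_spec hex
  obtain ⟨r, hrmem, hrI, m', hdr, hm'⟩ := LZAux.DIn.head_nt hdm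
  have hP1 : G.Produces [Symbol.nonterminal G.initial] r.output :=
    ⟨r, hrmem, hrI ▸ ContextFreeRule.Rewrites.input_output⟩
  have hctxR : G.Derives [Symbol.nonterminal G.initial]
      (List.map Symbol.terminal ([] : List α) ++ r.output
        ++ List.map Symbol.terminal ([] : List α)) := by
    simpa using hP1.single
  have hAnc : LZAux.InvAnc G m' {G.initial} := by
    intro C hC
    rcases hC with rfl
    refine ⟨s, ?_, ?_⟩
    · intro w' hw'
      have : w' ∈ G.language := hw'
      rw [hG] at this
      exact this
    · intro k hk
      have := Nat.find_min' hex hk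
      omega
  have hS : LZAux.InvS G [] (∅ : Finset (ContextFreeRule α G.NT)) := by
    intro r' hr'
    exact absurd hr' (Finset.notMem_empty r')
  obtain ⟨Q, S', hfl, hsub, hinv, hnew, hgood, hcount⟩ :=
    LZAux.main_induction hG m' r.output s [] [] ∅ {G.initial} hdr hctxR hS hAnc
  have hrS' : r ∉ S' := by
    intro h
    exact hnew r h (Finset.notMem_empty r) (by rw [hrI]; exact Set.mem_singleton _)
  have hsub' : insert r S' ⊆ G.rules := by
    intro a ha
    rcases Finset.mem_insert.mp ha with rfl | haS'
    · exact hrmem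
    · exact (hinv a haS').1
  have hsum : (∑ r'' ∈ insert r S', r''.output.length) ≤ grammarSize G :=
    Finset.sum_le_sum_of_subset hsub'
  have hins : (∑ r'' ∈ insert r S', r''.output.length)
      = r.output.length + ∑ r'' ∈ S', r''.output.length := Finset.sum_insert hrS'
  have hsd : (∑ r'' ∈ S' \ (∅ : Finset (ContextFreeRule α G.NT)), r''.output.length)
      = ∑ r'' ∈ S', r''.output.length := by rw [Finset.sdiff_empty]
  have hQlen : P.length ≤ Q.length := by
    refine LZAux.greedy_optimal s P Q hP hfl ?_
    intro k hk
    have := hgood k hk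
    simpa using this
  rw [hsd] at hcount
  simp only [Finset.card_empty] at hcount
  omega
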